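/- As operators on 𝒫 the following relations hold (brackets denote commutators, braces anticommutators): [D,G] = L, {d,d*} = L, d² = 0, (d*)² = 0, and L commutes with each of G, D, d, d*; moreover [D,d] = [D,d*] = 0 and [G,d] = [G,d*] = 0 (so G, D, L, d, d* realize the Heisenberg Lie superalgebra 𝔥(2|1,1) with center spanned by L). In addition the following cross relations with the fiberwise operators hold: [D,R] = 2G, [G,T] = −2D, [G,δ] = −d, [G,Q*] = −d*, [D,δ*] = d*, [D,Q] = d, {d,δ*} = G, {d,Q*} = D, {d*,δ} = D, {d*,Q} = G, {d,δ} = 0, {d,Q} = 0, {d*,δ*} = 0, {d*,Q*} = 0. -/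

import Mathlib

open MvPolynomial Finset

namespace SpinQuant

noncomputable section

/-- Diagonal entries of the signature-`(p,q)` bilinear form `η` on `ℝⁿ`, `n = p + q`:
`+1` for the first `p` indices and `-1` for the last `q` ones.  Since `η` is diagonal
and equal to its inverse, these are simultaneously the `η_{ii}` and the `η^{ii}`. -/
def eta (p q : ℕ) (i : Fin (p + q)) : ℝ := if (i : ℕ) < p then 1 else -1

/-- The supercommutative algebra `𝒫 = ℝ[x¹,…,xⁿ,p₁,…,pₙ] ⊗ Λ(ξ¹,…,ξⁿ)`, modeled as
families of polynomials in the even variables `x^i` (the `Sum.inl` indeterminates) and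
`p_i` (the `Sum.inr` indeterminates), indexed by the subsets of `Fin n` recording the
monomials in the odd variables `ξ^i`. -/
abbrev PS (p q : ℕ) := Finset (Fin (p + q)) → MvPolynomial (Fin (p + q) ⊕ Fin (p + q)) ℝ

/-- Koszul sign of moving `ξ^i` through the monomial `ξ^S`. -/
def sgn (p q : ℕ) (i : Fin (p + q)) (S : Finset (Fin (p + q))) : ℝ :=
  (-1) ^ (S.filter (fun j => j < i)).card

/-- Multiplication by the even variable `x^i`. -/
def xMul (p q : ℕ) (i : Fin (p + q)) : Module.End ℝ (PS p q) where
  toFun f S := X (Sum.inl i) * f S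
  map_add' f g := by funext S; simp [mul_add]
  map_smul' c f := by funext S; simp [mul_smul_comm]

/-- The partial derivative `∂/∂x^i`. -/
def xD (p q : ℕ) (i : Fin (p + q)) : Module.End ℝ (PS p q) where
  toFun f S := pderiv (Sum.inl i) (f S)
  map_add' f g := by funext S; simp
  map_smul' c f := by funext S; simp

/-- Multiplication by the even variable `p_i`. -/
def pMul (p q : ℕ) (i : Fin (p + q)) : Module.End ℝ (PS p q) where
  toFun f S := X (Sum.inr i) * f S
  map_add' f g := by funext S; simp [mul_add]
  map_smul' c f := by funext S; simp [mul_smul_comm]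

/-- The partial derivative `∂/∂p_i`. -/
def pD (p q : ℕ) (i : Fin (p + q)) : Module.End ℝ (PS p q) where
  toFun f S := pderiv (Sum.inr i) (f S)
  map_add' f g := by funext S; simp
  map_smul' c f := by funext S; simp

/-- Exterior multiplication by the odd variable `ξ^i`. -/
def xiMul (p q : ℕ) (i : Fin (p + q)) : Module.End ℝ (PS p q) where
  toFun f S := if i ∈ S then sgn p q i S • f (S.erase i) else 0
  map_add' f g := by funext S; by_cases h : i ∈ S <;> simp [h, smul_add]
  map_smul' c f := by funext S; by_cases h : i ∈ S <;> simp [h, smul_smul, mul_comm]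

/-- The odd superderivation `∂/∂ξ^i`, determined by `∂_{ξ^i}(ξ^j) = δ_i^j`. -/
def xiD (p q : ℕ) (i : Fin (p + q)) : Module.End ℝ (PS p q) where
  toFun f S := if i ∈ S then 0 else sgn p q i (insert i S) • f (insert i S)
  map_add' f g := by funext S; by_cases h : i ∈ S <;> simp [h, smul_add]
  map_smul' c f := by funext S; by_cases h : i ∈ S <;> simp [h, smul_smul, mul_comm]

/-- `R`, multiplication by `η^{ij} p_i p_j`. -/
def opR (p q : ℕ) : Module.End ℝ (PS p q) := ∑ i, eta p q i • (pMul p q i * pMul p q i)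

/-- The even Euler operator `ℰ = p_i ∂_{p_i}`. -/
def opE (p q : ℕ) : Module.End ℝ (PS p q) := ∑ i, pMul p q i * pD p q i

/-- The trace operator `T = η_{ij} ∂_{p_i} ∂_{p_j}`. -/
def opT (p q : ℕ) : Module.End ℝ (PS p q) := ∑ i, eta p q i • (pD p q i * pD p q i)

/-- The odd Euler operator `Σ = ξ^i ∂_{ξ^i}`. -/
def opS (p q : ℕ) : Module.End ℝ (PS p q) := ∑ i, xiMul p q i * xiD p q i

/-- `Q`, multiplication by `ξ^i p_i`. -/
def opQ (p q : ℕ) : Module.End ℝ (PS p q) := ∑ i, xiMul p q i * pMul p q i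

/-- `Q* = ∂_{ξ^i} ∂_{p_i}`. -/
def opQs (p q : ℕ) : Module.End ℝ (PS p q) := ∑ i, xiD p q i * pD p q i

/-- The Koszul differential `δ = η_{ij} ξ^i ∂_{p_j}`. -/
def opd (p q : ℕ) : Module.End ℝ (PS p q) := ∑ i, eta p q i • (xiMul p q i * pD p q i)

/-- The Koszul codifferential `δ* = η^{ij} p_i ∂_{ξ^j}`. -/
def opds (p q : ℕ) : Module.End ℝ (PS p q) := ∑ i, eta p q i • (pMul p q i * xiD p q i)

/-- The gradient `G = η^{ij} p_i ∂_{x^j}`. -/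
def opG (p q : ℕ) : Module.End ℝ (PS p q) := ∑ i, eta p q i • (pMul p q i * xD p q i)

/-- The divergence `D = ∂_{p_i} ∂_{x^i}`. -/
def opD (p q : ℕ) : Module.End ℝ (PS p q) := ∑ i, pD p q i * xD p q i

/-- The Laplacian `L = η^{ij} ∂_{x^i} ∂_{x^j}`. -/
def opL (p q : ℕ) : Module.End ℝ (PS p q) := ∑ i, eta p q i • (xD p q i * xD p q i)

/-- The de Rham differential `d = ξ^i ∂_{x^i}`. -/
def opdR (p q : ℕ) : Module.End ℝ (PS p q) := ∑ i, xiMul p q i * xD p q i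

/-- The de Rham codifferential `d* = η^{ij} ∂_{ξ^i} ∂_{x^j}`. -/
def opdRs (p q : ℕ) : Module.End ℝ (PS p q) := ∑ i, eta p q i • (xiD p q i * xD p q i)

/-- The commutator `[A,B] = AB − BA`. -/
def cm {p q : ℕ} (A B : Module.End ℝ (PS p q)) : Module.End ℝ (PS p q) := A * B - B * A

/-- The anticommutator `{A,B} = AB + BA`. -/
def acm {p q : ℕ} (A B : Module.End ℝ (PS p q)) : Module.End ℝ (PS p q) := A * B + B * A


set_option maxHeartbeats 1000000

section Aux
variable {p q : ℕ}

lemma pderiv_comm' {σ R : Type*} [CommRing R] (i j : σ) (f : MvPolynomial σ R) :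
    pderiv i (pderiv j f) = pderiv j (pderiv i f) := by
  classical
  induction f using MvPolynomial.induction_on with
  | C a => simp
  | add f g hf hg => simp [hf, hg]
  | mul_X f n ih =>
    simp only [pderiv_mul, map_add, pderiv_mul, ih, pderiv_X, Pi.single_apply]
    split_ifs <;> simp <;> ring

lemma pd_rot {σ R : Type*} [CommRing R] (a b c : σ) (g : MvPolynomial σ R) :
    pderiv a (pderiv b (pderiv c g)) = pderiv c (pderiv b (pderiv a g)) := by
  rw [pderiv_comm' b c, pderiv_comm' a c, pderiv_comm' a b]

lemma endExt {A B : Module.End ℝ (PS p q)}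
    (h : ∀ (f : PS p q) (S : Finset (Fin (p+q))), A f S = B f S) : A = B :=
  LinearMap.ext fun f => funext fun S => h f S

@[simp] lemma eta_mul_self (i : Fin (p + q)) : eta p q i * eta p q i = 1 := by
  unfold eta; split_ifs <;> norm_num

@[simp] lemma sgn_mul_self (i : Fin (p + q)) (S) : sgn p q i S * sgn p q i S = 1 := by
  unfold sgn; rw [← mul_pow]; norm_num

@[simp] lemma xD_apply (i : Fin (p+q)) (f : PS p q) (S) :
    xD p q i f S = pderiv (Sum.inl i) (f S) := rfl
@[simp] lemma pMul_apply (i : Fin (p+q)) (f : PS p q) (S) :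
    pMul p q i f S = X (Sum.inr i) * f S := rfl
@[simp] lemma pD_apply (i : Fin (p+q)) (f : PS p q) (S) :
    pD p q i f S = pderiv (Sum.inr i) (f S) := rfl
@[simp] lemma xiMul_apply (i : Fin (p+q)) (f : PS p q) (S) :
    xiMul p q i f S = if i ∈ S then sgn p q i S • f (S.erase i) else 0 := rfl
@[simp] lemma xiD_apply (i : Fin (p+q)) (f : PS p q) (S) :
    xiD p q i f S = if i ∈ S then 0 else sgn p q i (insert i S) • f (insert i S) := rfl

@[simp] lemma sgn_insert_self (i : Fin (p+q)) (S) : sgn p q i (insert i S) = sgn p q i S := by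
  unfold sgn; rw [Finset.filter_insert]; simp

@[simp] lemma sgn_erase_self (i : Fin (p+q)) (S) : sgn p q i (S.erase i) = sgn p q i S := by
  unfold sgn; rw [Finset.filter_erase]; rw [Finset.erase_eq_of_notMem (by simp)]

lemma sgn_insert (i : Fin (p+q)) {j : Fin (p+q)} {S} (h : j ∉ S) :
    sgn p q i (insert j S) = (if j < i then -1 else 1) * sgn p q i S := by
  unfold sgn; rw [Finset.filter_insert]
  split_ifs with hj
  · rw [Finset.card_insert_of_notMem (by simp [h]), pow_succ]; ring
  · ring

lemma sgn_erase (i : Fin (p+q)) {j : Fin (p+q)} {S} (h : j ∈ S) :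
    sgn p q i (S.erase j) = (if j < i then -1 else 1) * sgn p q i S := by
  have h2 := sgn_insert (p := p) (q := q) i (Finset.notMem_erase j S)
  rw [Finset.insert_erase h] at h2
  rw [h2, ← mul_assoc]
  split_ifs <;> ring

@[simp] lemma C_sgn_sgn (i : Fin (p+q)) (S) (x : MvPolynomial (Fin (p+q) ⊕ Fin (p+q)) ℝ) :
    C (sgn p q i S) * (C (sgn p q i S) * x) = x := by
  rw [← mul_assoc, ← map_mul, sgn_mul_self, map_one, one_mul]
@[simp] lemma C_sgn_sq (i : Fin (p+q)) (S) :
    (C (sgn p q i S) : MvPolynomial (Fin (p+q) ⊕ Fin (p+q)) ℝ) ^ 2 = 1 := by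
  rw [sq, ← map_mul, sgn_mul_self, map_one]
@[simp] lemma C_eta_eta (i : Fin (p+q)) (x : MvPolynomial (Fin (p+q) ⊕ Fin (p+q)) ℝ) :
    C (eta p q i) * (C (eta p q i) * x) = x := by
  rw [← mul_assoc, ← map_mul, eta_mul_self, map_one, one_mul]
@[simp] lemma C_eta_sq (i : Fin (p+q)) :
    (C (eta p q i) : MvPolynomial (Fin (p+q) ⊕ Fin (p+q)) ℝ) ^ 2 = 1 := by
  rw [sq, ← map_mul, eta_mul_self, map_one]

-- generator commutation relations
lemma xD_xD (i j : Fin (p+q)) : xD p q i * xD p q j = xD p q j * xD p q i := by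
  refine endExt fun f S => ?_
  simp [Module.End.mul_apply, pderiv_comm' (Sum.inl i) (Sum.inl j)]
lemma xD_pD (i j : Fin (p+q)) : xD p q i * pD p q j = pD p q j * xD p q i := by
  refine endExt fun f S => ?_
  simp [Module.End.mul_apply, pderiv_comm' (Sum.inl i) (Sum.inr j)]
lemma xD_pM (i j : Fin (p+q)) : xD p q i * pMul p q j = pMul p q j * xD p q i := by
  refine endExt fun f S => ?_
  simp [Module.End.mul_apply, pderiv_mul, pderiv_X_of_ne (by simp : Sum.inr j ≠ Sum.inl i)]
lemma xD_xiM (i j : Fin (p+q)) : xD p q i * xiMul p q j = xiMul p q j * xD p q i := by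
  refine endExt fun f S => ?_
  by_cases h : j ∈ S <;> simp [Module.End.mul_apply, h]
lemma xD_xiD (i j : Fin (p+q)) : xD p q i * xiD p q j = xiD p q j * xD p q i := by
  refine endExt fun f S => ?_
  by_cases h : j ∈ S <;> simp [Module.End.mul_apply, h]
lemma pD_xiM (i j : Fin (p+q)) : pD p q i * xiMul p q j = xiMul p q j * pD p q i := by
  refine endExt fun f S => ?_
  by_cases h : j ∈ S <;> simp [Module.End.mul_apply, h]
lemma pD_xiD (i j : Fin (p+q)) : pD p q i * xiD p q j = xiD p q j * pD p q i := by
  refine endExt fun f S => ?_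
  by_cases h : j ∈ S <;> simp [Module.End.mul_apply, h]
lemma pM_xiM (i j : Fin (p+q)) : pMul p q i * xiMul p q j = xiMul p q j * pMul p q i := by
  refine endExt fun f S => ?_
  by_cases h : j ∈ S <;> simp [Module.End.mul_apply, h, mul_smul_comm]
lemma pM_xiD (i j : Fin (p+q)) : pMul p q i * xiD p q j = xiD p q j * pMul p q i := by
  refine endExt fun f S => ?_
  by_cases h : j ∈ S <;> simp [Module.End.mul_apply, h, mul_smul_comm]

lemma xiM_xiM (i j : Fin (p+q)) : xiMul p q i * xiMul p q j = -(xiMul p q j * xiMul p q i) := by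
  refine endExt fun f S => ?_
  by_cases h : i = j
  · subst h; by_cases hS : i ∈ S <;> simp [Module.End.mul_apply, hS]
  · have h' : j ≠ i := Ne.symm h
    rcases (Ne.lt_or_gt h : i < j ∨ j < i) with hlt | hlt <;>
    by_cases hiS : i ∈ S <;> by_cases hjS : j ∈ S <;>
      simp [Module.End.mul_apply, hiS, hjS, h, h', smul_smul, Finset.mem_erase,
        Finset.erase_right_comm, sgn_erase, hlt, asymm hlt, smul_eq_C_mul] <;>
      ring

lemma xiD_xiD (i j : Fin (p+q)) : xiD p q i * xiD p q j = -(xiD p q j * xiD p q i) := by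
  refine endExt fun f S => ?_
  by_cases h : i = j
  · subst h; by_cases hS : i ∈ S <;> simp [Module.End.mul_apply, hS]
  · have h' : j ≠ i := Ne.symm h
    rcases (Ne.lt_or_gt h : i < j ∨ j < i) with hlt | hlt <;>
    by_cases hiS : i ∈ S <;> by_cases hjS : j ∈ S <;>
      simp [Module.End.mul_apply, hiS, hjS, h, h', smul_smul, Finset.mem_insert,
        Finset.insert_comm, sgn_insert, hlt, asymm hlt, smul_eq_C_mul] <;>
      ring

-- abstract 4-factor swap lemmas
lemma mul4_swap {M : Type*} [Ring M] {A B C D : M} (h1 : A*C = C*A) (h2 : A*D = D*A)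
    (h3 : B*C = C*B) (h4 : B*D = D*B) : (A*B)*(C*D) = (C*D)*(A*B) := by
  rw [mul_assoc A B (C*D), ← mul_assoc B C D, h3, mul_assoc C B D, h4,
    ← mul_assoc C D B, ← mul_assoc A (C*D) B, ← mul_assoc A C D, h1,
    mul_assoc C A D, h2, ← mul_assoc C D A, mul_assoc (C*D) A B]
lemma mul4_swap_neg1 {M : Type*} [Ring M] {A B C D : M} (h1 : A*C = -(C*A)) (h2 : A*D = D*A)
    (h3 : B*C = C*B) (h4 : B*D = D*B) : (A*B)*(C*D) = -((C*D)*(A*B)) := by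
  rw [mul_assoc A B (C*D), ← mul_assoc B C D, h3, mul_assoc C B D, h4,
    ← mul_assoc C D B, ← mul_assoc A (C*D) B, ← mul_assoc A C D, h1,
    neg_mul, neg_mul, mul_assoc C A D, h2, ← mul_assoc C D A, mul_assoc (C*D) A B]
lemma mul4_swap_neg2 {M : Type*} [Ring M] {A B C D : M} (h1 : A*C = C*A) (h2 : A*D = -(D*A))
    (h3 : B*C = C*B) (h4 : B*D = D*B) : (A*B)*(C*D) = -((C*D)*(A*B)) := by
  rw [mul_assoc A B (C*D), ← mul_assoc B C D, h3, mul_assoc C B D, h4,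
    ← mul_assoc C D B, ← mul_assoc A (C*D) B, ← mul_assoc A C D, h1,
    mul_assoc C A D, h2, mul_neg, neg_mul, ← mul_assoc C D A, mul_assoc (C*D) A B]

lemma cm_eq_zero {A B : Module.End ℝ (PS p q)} (h : A * B = B * A) : cm A B = 0 := by
  rw [cm, h, sub_self]
lemma acm_eq_zero {A B : Module.End ℝ (PS p q)} (h : A * B = -(B * A)) : acm A B = 0 := by
  rw [acm, h, neg_add_cancel]
lemma cm_smul_left (a : ℝ) (A B : Module.End ℝ (PS p q)) : cm (a • A) B = a • cm A B := by
  simp [cm, smul_sub, smul_mul_assoc, mul_smul_comm]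
lemma cm_smul_right (a : ℝ) (A B : Module.End ℝ (PS p q)) : cm A (a • B) = a • cm A B := by
  simp [cm, smul_sub, smul_mul_assoc, mul_smul_comm]
lemma acm_smul_left (a : ℝ) (A B : Module.End ℝ (PS p q)) : acm (a • A) B = a • acm A B := by
  simp [acm, smul_add, smul_mul_assoc, mul_smul_comm]
lemma acm_smul_right (a : ℝ) (A B : Module.End ℝ (PS p q)) : acm A (a • B) = a • acm A B := by
  simp [acm, smul_add, smul_mul_assoc, mul_smul_comm]

lemma cm_sum_sum {ι : Type*} [Fintype ι] (A B : ι → Module.End ℝ (PS p q)) :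
    cm (∑ i, A i) (∑ j, B j) = ∑ i, ∑ j, cm (A i) (B j) := by
  have h : (∑ j, B j) * (∑ i, A i) = ∑ i, ∑ j, B j * A i := by
    rw [Finset.sum_mul_sum]; exact Finset.sum_comm
  rw [cm, Finset.sum_mul_sum, h, ← Finset.sum_sub_distrib]
  exact Finset.sum_congr rfl fun i _ => (Finset.sum_sub_distrib _ _).symm

lemma acm_sum_sum {ι : Type*} [Fintype ι] (A B : ι → Module.End ℝ (PS p q)) :
    acm (∑ i, A i) (∑ j, B j) = ∑ i, ∑ j, acm (A i) (B j) := by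
  have h : (∑ j, B j) * (∑ i, A i) = ∑ i, ∑ j, B j * A i := by
    rw [Finset.sum_mul_sum]; exact Finset.sum_comm
  rw [acm, Finset.sum_mul_sum, h, ← Finset.sum_add_distrib]
  exact Finset.sum_congr rfl fun i _ => (Finset.sum_add_distrib).symm

end Aux

section Aux2
variable {p q : ℕ}

-- tw1 : [D,G] termwise
lemma tw1 (i j : Fin (p+q)) :
    cm (pD p q i * xD p q i) (eta p q j • (pMul p q j * xD p q j)) =
      if i = j then eta p q i • (xD p q i * xD p q i) else 0 := by
  refine endExt fun f S => ?_
  by_cases h : i = j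
  · subst h
    simp [cm, Module.End.mul_apply, pderiv_mul, pderiv_X, Pi.single_apply, smul_eq_C_mul]
    rw [pderiv_comm' (Sum.inr i) (Sum.inl i)]
    ring
  · simp [cm, Module.End.mul_apply, pderiv_mul, pderiv_X, Pi.single_apply, Sum.inr.injEq, h,
      Ne.symm h, smul_eq_C_mul]
    rw [pd_rot, pderiv_comm' (Sum.inl i) (Sum.inr i)]; ring

-- tw2 : {d,d*} termwise
lemma tw2 (i j : Fin (p+q)) :
    acm (xiMul p q i * xD p q i) (eta p q j • (xiD p q j * xD p q j)) =
      if i = j then eta p q i • (xD p q i * xD p q i) else 0 := by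
  refine endExt fun f S => ?_
  by_cases h : i = j
  · subst h
    by_cases hS : i ∈ S
    · simp [acm, Module.End.mul_apply, hS, Finset.insert_erase hS, smul_smul,
        mul_comm, mul_assoc, mul_left_comm]
    · simp [acm, Module.End.mul_apply, hS, Finset.erase_insert hS, smul_smul,
        mul_comm, mul_assoc, mul_left_comm]
  · have h' : j ≠ i := Ne.symm h
    rcases (Ne.lt_or_gt h : i < j ∨ j < i) with hlt | hlt <;>
    by_cases hiS : i ∈ S <;> by_cases hjS : j ∈ S <;>
      simp [acm, Module.End.mul_apply, hiS, hjS, h, h', smul_smul, Finset.mem_erase,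
        Finset.mem_insert, Finset.erase_insert_of_ne, Finset.insert_comm,
        Finset.erase_right_comm, sgn_erase, sgn_insert, hlt, asymm hlt,
        Finset.notMem_erase, smul_eq_C_mul, map_neg] <;>
      (try rw [pderiv_comm' (Sum.inl i) (Sum.inl j)]) <;> (try ring)

-- tw13 : [D,R] termwise
lemma tw13 (i j : Fin (p+q)) :
    cm (pD p q i * xD p q i) (eta p q j • (pMul p q j * pMul p q j)) =
      if i = j then (2:ℝ) • (eta p q i • (pMul p q i * xD p q i)) else 0 := by
  refine endExt fun f S => ?_
  by_cases h : i = j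
  · subst h
    simp [cm, Module.End.mul_apply, pderiv_mul, pderiv_X, Pi.single_apply, smul_eq_C_mul,
      map_ofNat]
    rw [pderiv_comm' (Sum.inr i) (Sum.inl i)]
    ring
  · simp [cm, Module.End.mul_apply, pderiv_mul, pderiv_X, Pi.single_apply, Sum.inr.injEq, h,
      Ne.symm h, smul_eq_C_mul, map_ofNat]
    (try rw [pderiv_comm' (Sum.inr i) (Sum.inl i)]); (try ring)

-- tw14 : [G,T] termwise
lemma tw14 (i j : Fin (p+q)) :
    cm (eta p q i • (pMul p q i * xD p q i)) (eta p q j • (pD p q j * pD p q j)) =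
      if i = j then (-2:ℝ) • (pD p q i * xD p q i) else 0 := by
  refine endExt fun f S => ?_
  by_cases h : i = j
  · subst h
    simp [cm, Module.End.mul_apply, pderiv_mul, pderiv_X, Pi.single_apply, smul_eq_C_mul,
      map_ofNat]
    (try rw [pd_rot (Sum.inl i) (Sum.inr i) (Sum.inr i), pderiv_comm' (Sum.inr i) (Sum.inl i)])
    (try ring)
  · simp [cm, Module.End.mul_apply, pderiv_mul, pderiv_X, Pi.single_apply, Sum.inr.injEq, h,
      Ne.symm h, smul_eq_C_mul]
    rw [pd_rot (Sum.inl i) (Sum.inr j) (Sum.inr j)]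
    ring

-- tw15 : [G,δ] termwise
lemma tw15 (i j : Fin (p+q)) :
    cm (eta p q i • (pMul p q i * xD p q i)) (eta p q j • (xiMul p q j * pD p q j)) =
      if i = j then -(xiMul p q i * xD p q i) else 0 := by
  refine endExt fun f S => ?_
  by_cases h : i = j
  · subst h
    by_cases hS : i ∈ S <;>
      simp [cm, Module.End.mul_apply, hS, pderiv_mul, pderiv_X, Pi.single_apply,
        smul_eq_C_mul, smul_smul] <;>
      (try rw [pderiv_comm' (Sum.inl i) (Sum.inr i)]) <;> (try ring)
  · by_cases hS : j ∈ S <;>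
      simp [cm, Module.End.mul_apply, hS, pderiv_mul, pderiv_X, Pi.single_apply,
        Sum.inr.injEq, h, Ne.symm h, smul_eq_C_mul, smul_smul] <;>
      (try rw [pderiv_comm' (Sum.inl i) (Sum.inr j)]) <;> (try ring)

-- tw16 : [G,Q*] termwise
lemma tw16 (i j : Fin (p+q)) :
    cm (eta p q i • (pMul p q i * xD p q i)) (xiD p q j * pD p q j) =
      if i = j then -(eta p q i • (xiD p q i * xD p q i)) else 0 := by
  refine endExt fun f S => ?_
  by_cases h : i = j
  · subst h
    by_cases hS : i ∈ S <;>
      simp [cm, Module.End.mul_apply, hS, pderiv_mul, pderiv_X, Pi.single_apply,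
        smul_eq_C_mul, smul_smul] <;>
      (try rw [pderiv_comm' (Sum.inl i) (Sum.inr i)]) <;> (try ring)
  · by_cases hS : j ∈ S <;>
      simp [cm, Module.End.mul_apply, hS, pderiv_mul, pderiv_X, Pi.single_apply,
        Sum.inr.injEq, h, Ne.symm h, smul_eq_C_mul, smul_smul] <;>
      (try rw [pderiv_comm' (Sum.inl i) (Sum.inr j)]) <;> (try ring)

-- tw17 : [D,δ*] termwise
lemma tw17 (i j : Fin (p+q)) :
    cm (pD p q i * xD p q i) (eta p q j • (pMul p q j * xiD p q j)) =
      if i = j then eta p q i • (xiD p q i * xD p q i) else 0 := by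
  refine endExt fun f S => ?_
  by_cases h : i = j
  · subst h
    by_cases hS : i ∈ S <;>
      simp [cm, Module.End.mul_apply, hS, pderiv_mul, pderiv_X, Pi.single_apply,
        smul_eq_C_mul, smul_smul] <;>
      (try rw [pderiv_comm' (Sum.inr i) (Sum.inl i)]) <;> (try ring)
  · by_cases hS : j ∈ S <;>
      simp [cm, Module.End.mul_apply, hS, pderiv_mul, pderiv_X, Pi.single_apply,
        Sum.inr.injEq, h, Ne.symm h, smul_eq_C_mul, smul_smul] <;>
      (try rw [pderiv_comm' (Sum.inr i) (Sum.inl i)]) <;> (try ring)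

-- tw18 : [D,Q] termwise
lemma tw18 (i j : Fin (p+q)) :
    cm (pD p q i * xD p q i) (xiMul p q j * pMul p q j) =
      if i = j then xiMul p q i * xD p q i else 0 := by
  refine endExt fun f S => ?_
  by_cases h : i = j
  · subst h
    by_cases hS : i ∈ S <;>
      simp [cm, Module.End.mul_apply, hS, pderiv_mul, pderiv_X, Pi.single_apply,
        smul_eq_C_mul, smul_smul] <;>
      (try rw [pderiv_comm' (Sum.inr i) (Sum.inl i)]) <;> (try ring)
  · by_cases hS : j ∈ S <;>
      simp [cm, Module.End.mul_apply, hS, pderiv_mul, pderiv_X, Pi.single_apply,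
        Sum.inr.injEq, h, Ne.symm h, smul_eq_C_mul, smul_smul] <;>
      (try rw [pderiv_comm' (Sum.inr i) (Sum.inl i)]) <;> (try ring)

-- tw19 : {d,δ*} termwise
lemma tw19 (i j : Fin (p+q)) :
    acm (xiMul p q i * xD p q i) (eta p q j • (pMul p q j * xiD p q j)) =
      if i = j then eta p q i • (pMul p q i * xD p q i) else 0 := by
  refine endExt fun f S => ?_
  by_cases h : i = j
  · subst h
    by_cases hS : i ∈ S
    · simp [acm, Module.End.mul_apply, hS, Finset.insert_erase hS, smul_smul,
        smul_eq_C_mul, mul_comm, mul_assoc, mul_left_comm]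
    · simp [acm, Module.End.mul_apply, hS, Finset.erase_insert hS, smul_smul,
        smul_eq_C_mul, mul_comm, mul_assoc, mul_left_comm]
  · have h' : j ≠ i := Ne.symm h
    rcases (Ne.lt_or_gt h : i < j ∨ j < i) with hlt | hlt <;>
    by_cases hiS : i ∈ S <;> by_cases hjS : j ∈ S <;>
      simp [acm, Module.End.mul_apply, hiS, hjS, h, h', smul_smul, Finset.mem_erase,
        Finset.mem_insert, Finset.erase_insert_of_ne, Finset.insert_comm,
        Finset.erase_right_comm, sgn_erase, sgn_insert, hlt, asymm hlt,
        Finset.notMem_erase, smul_eq_C_mul, map_neg] <;>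
      (try ring)

-- tw20 : {d,Q*} termwise
lemma tw20 (i j : Fin (p+q)) :
    acm (xiMul p q i * xD p q i) (xiD p q j * pD p q j) =
      if i = j then pD p q i * xD p q i else 0 := by
  refine endExt fun f S => ?_
  by_cases h : i = j
  · subst h
    by_cases hS : i ∈ S
    · simp [acm, Module.End.mul_apply, hS, Finset.insert_erase hS, smul_smul,
        smul_eq_C_mul, mul_comm, mul_assoc, mul_left_comm]
      try rw [pderiv_comm' (Sum.inr i) (Sum.inl i)]
    · simp [acm, Module.End.mul_apply, hS, Finset.erase_insert hS, smul_smul,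
        smul_eq_C_mul, mul_comm, mul_assoc, mul_left_comm]
      try rw [pderiv_comm' (Sum.inr i) (Sum.inl i)]
  · have h' : j ≠ i := Ne.symm h
    rcases (Ne.lt_or_gt h : i < j ∨ j < i) with hlt | hlt <;>
    by_cases hiS : i ∈ S <;> by_cases hjS : j ∈ S <;>
      simp [acm, Module.End.mul_apply, hiS, hjS, h, h', smul_smul, Finset.mem_erase,
        Finset.mem_insert, Finset.erase_insert_of_ne, Finset.insert_comm,
        Finset.erase_right_comm, sgn_erase, sgn_insert, hlt, asymm hlt,
        Finset.notMem_erase, smul_eq_C_mul, map_neg] <;>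
      (try rw [pderiv_comm' (Sum.inl i) (Sum.inr j)]) <;> (try ring)

-- tw21 : {d*,δ} termwise
lemma tw21 (i j : Fin (p+q)) :
    acm (eta p q i • (xiD p q i * xD p q i)) (eta p q j • (xiMul p q j * pD p q j)) =
      if i = j then pD p q i * xD p q i else 0 := by
  refine endExt fun f S => ?_
  by_cases h : i = j
  · subst h
    by_cases hS : i ∈ S
    · simp [acm, Module.End.mul_apply, hS, Finset.insert_erase hS, smul_smul,
        smul_eq_C_mul, mul_comm, mul_assoc, mul_left_comm]
      try rw [pderiv_comm' (Sum.inr i) (Sum.inl i)]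
    · simp [acm, Module.End.mul_apply, hS, Finset.erase_insert hS, smul_smul,
        smul_eq_C_mul, mul_comm, mul_assoc, mul_left_comm]
      try rw [pderiv_comm' (Sum.inr i) (Sum.inl i)]
  · have h' : j ≠ i := Ne.symm h
    rcases (Ne.lt_or_gt h : i < j ∨ j < i) with hlt | hlt <;>
    by_cases hiS : i ∈ S <;> by_cases hjS : j ∈ S <;>
      simp [acm, Module.End.mul_apply, hiS, hjS, h, h', smul_smul, Finset.mem_erase,
        Finset.mem_insert, Finset.erase_insert_of_ne, Finset.insert_comm,
        Finset.erase_right_comm, sgn_erase, sgn_insert, hlt, asymm hlt,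
        Finset.notMem_erase, smul_eq_C_mul, map_neg] <;>
      (try rw [pderiv_comm' (Sum.inl i) (Sum.inr j)]) <;> (try ring)

-- tw22 : {d*,Q} termwise
lemma tw22 (i j : Fin (p+q)) :
    acm (eta p q i • (xiD p q i * xD p q i)) (xiMul p q j * pMul p q j) =
      if i = j then eta p q i • (pMul p q i * xD p q i) else 0 := by
  refine endExt fun f S => ?_
  by_cases h : i = j
  · subst h
    by_cases hS : i ∈ S
    · simp [acm, Module.End.mul_apply, hS, Finset.insert_erase hS, smul_smul,
        smul_eq_C_mul, mul_comm, mul_assoc, mul_left_comm]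
    · simp [acm, Module.End.mul_apply, hS, Finset.erase_insert hS, smul_smul,
        smul_eq_C_mul, mul_comm, mul_assoc, mul_left_comm]
  · have h' : j ≠ i := Ne.symm h
    rcases (Ne.lt_or_gt h : i < j ∨ j < i) with hlt | hlt <;>
    by_cases hiS : i ∈ S <;> by_cases hjS : j ∈ S <;>
      simp [acm, Module.End.mul_apply, hiS, hjS, h, h', smul_smul, Finset.mem_erase,
        Finset.mem_insert, Finset.erase_insert_of_ne, Finset.insert_comm,
        Finset.erase_right_comm, sgn_erase, sgn_insert, hlt, asymm hlt,
        Finset.notMem_erase, smul_eq_C_mul, map_neg] <;>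
      (try ring)

lemma twd2 (i j : Fin (p+q)) :
    (xiMul p q i * xD p q i) * (xiMul p q j * xD p q j) =
      -((xiMul p q j * xD p q j) * (xiMul p q i * xD p q i)) :=
  mul4_swap_neg1 (xiM_xiM i j) ((xD_xiM j i).symm) (xD_xiM i j) (xD_xD i j)

lemma twds2 (i j : Fin (p+q)) :
    (eta p q i • (xiD p q i * xD p q i)) * (eta p q j • (xiD p q j * xD p q j)) =
      -((eta p q j • (xiD p q j * xD p q j)) * (eta p q i • (xiD p q i * xD p q i))) := by
  rw [smul_mul_smul_comm, smul_mul_smul_comm,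
    mul4_swap_neg1 (xiD_xiD i j) ((xD_xiD j i).symm) (xD_xiD i j) (xD_xD i j),
    smul_neg, mul_comm (eta p q i)]

lemma tw5 (i j : Fin (p+q)) :
    cm (eta p q i • (xD p q i * xD p q i)) (eta p q j • (pMul p q j * xD p q j)) = 0 := by
  rw [cm_smul_left, cm_smul_right,
    cm_eq_zero (mul4_swap (xD_pM i j) (xD_xD i j) (xD_pM i j) (xD_xD i j)), smul_zero, smul_zero]

lemma tw6 (i j : Fin (p+q)) :
    cm (eta p q i • (xD p q i * xD p q i)) (pD p q j * xD p q j) = 0 := by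
  rw [cm_smul_left,
    cm_eq_zero (mul4_swap (xD_pD i j) (xD_xD i j) (xD_pD i j) (xD_xD i j)), smul_zero]

lemma tw7 (i j : Fin (p+q)) :
    cm (eta p q i • (xD p q i * xD p q i)) (xiMul p q j * xD p q j) = 0 := by
  rw [cm_smul_left,
    cm_eq_zero (mul4_swap (xD_xiM i j) (xD_xD i j) (xD_xiM i j) (xD_xD i j)), smul_zero]

lemma tw8 (i j : Fin (p+q)) :
    cm (eta p q i • (xD p q i * xD p q i)) (eta p q j • (xiD p q j * xD p q j)) = 0 := by
  rw [cm_smul_left, cm_smul_right,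
    cm_eq_zero (mul4_swap (xD_xiD i j) (xD_xD i j) (xD_xiD i j) (xD_xD i j)), smul_zero, smul_zero]

lemma tw9 (i j : Fin (p+q)) :
    cm (pD p q i * xD p q i) (xiMul p q j * xD p q j) = 0 :=
  cm_eq_zero (mul4_swap (pD_xiM i j) ((xD_pD j i).symm) (xD_xiM i j) (xD_xD i j))

lemma tw10 (i j : Fin (p+q)) :
    cm (pD p q i * xD p q i) (eta p q j • (xiD p q j * xD p q j)) = 0 := by
  rw [cm_smul_right,
    cm_eq_zero (mul4_swap (pD_xiD i j) ((xD_pD j i).symm) (xD_xiD i j) (xD_xD i j)), smul_zero]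

lemma tw11 (i j : Fin (p+q)) :
    cm (eta p q i • (pMul p q i * xD p q i)) (xiMul p q j * xD p q j) = 0 := by
  rw [cm_smul_left,
    cm_eq_zero (mul4_swap (pM_xiM i j) ((xD_pM j i).symm) (xD_xiM i j) (xD_xD i j)), smul_zero]

lemma tw12 (i j : Fin (p+q)) :
    cm (eta p q i • (pMul p q i * xD p q i)) (eta p q j • (xiD p q j * xD p q j)) = 0 := by
  rw [cm_smul_left, cm_smul_right,
    cm_eq_zero (mul4_swap (pM_xiD i j) ((xD_pM j i).symm) (xD_xiD i j) (xD_xD i j)),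
    smul_zero, smul_zero]

lemma tw23 (i j : Fin (p+q)) :
    acm (xiMul p q i * xD p q i) (eta p q j • (xiMul p q j * pD p q j)) = 0 := by
  rw [acm_smul_right,
    acm_eq_zero (mul4_swap_neg1 (xiM_xiM i j) ((pD_xiM j i).symm) (xD_xiM i j) (xD_pD i j)),
    smul_zero]

lemma tw24 (i j : Fin (p+q)) :
    acm (xiMul p q i * xD p q i) (xiMul p q j * pMul p q j) = 0 :=
  acm_eq_zero (mul4_swap_neg1 (xiM_xiM i j) ((pM_xiM j i).symm) (xD_xiM i j) (xD_pM i j))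

lemma tw25 (i j : Fin (p+q)) :
    acm (eta p q i • (xiD p q i * xD p q i)) (eta p q j • (pMul p q j * xiD p q j)) = 0 := by
  rw [acm_smul_left, acm_smul_right,
    acm_eq_zero (mul4_swap_neg2 ((pM_xiD j i).symm) (xiD_xiD i j) (xD_pM i j) (xD_xiD i j)),
    smul_zero, smul_zero]

lemma tw26 (i j : Fin (p+q)) :
    acm (eta p q i • (xiD p q i * xD p q i)) (xiD p q j * pD p q j) = 0 := by
  rw [acm_smul_left,
    acm_eq_zero (mul4_swap_neg1 (xiD_xiD i j) ((pD_xiD j i).symm) (xD_xiD i j) (xD_pD i j)),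
    smul_zero]

lemma sq_zero_of_skew {A : Fin (p+q) → Module.End ℝ (PS p q)}
    (h : ∀ i j, A i * A j = -(A j * A i)) : (∑ i, A i) * (∑ i, A i) = 0 := by
  have key : (∑ i, A i) * (∑ i, A i) = -((∑ i, A i) * (∑ i, A i)) := by
    rw [Finset.sum_mul_sum]
    calc ∑ i, ∑ j, A i * A j = ∑ i, ∑ j, -(A j * A i) :=
          Finset.sum_congr rfl fun i _ => Finset.sum_congr rfl fun j _ => h i j
      _ = -(∑ i, ∑ j, A j * A i) := by simp
      _ = -(∑ j, ∑ i, A j * A i) := by rw [Finset.sum_comm]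
  have h3 : (2:ℝ) • ((∑ i, A i) * (∑ i, A i)) = 0 := by
    rw [two_smul]
    nth_rewrite 2 [key]
    exact add_neg_cancel _
  have h4 : (∑ i, A i) * (∑ i, A i) = (1/2:ℝ) • ((2:ℝ) • ((∑ i, A i) * (∑ i, A i))) := by
    rw [smul_smul]; norm_num
  rw [h4, h3, smul_zero]

end Aux2

/-- On `𝒫`: `[D,G] = L`, `{d,d*} = L`, `d² = 0`, `(d*)² = 0`, `L` commutes
with `G, D, d, d*`, `[D,d] = [D,d*] = 0`, `[G,d] = [G,d*] = 0` (so `G, D, L, d, d*` realize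
the Heisenberg Lie superalgebra `𝔥(2|1,1)` with center spanned by `L`), together with the
cross relations `[D,R] = 2G`, `[G,T] = −2D`, `[G,δ] = −d`, `[G,Q*] = −d*`, `[D,δ*] = d*`,
`[D,Q] = d`, `{d,δ*} = G`, `{d,Q*} = D`, `{d*,δ} = D`, `{d*,Q} = G`, `{d,δ} = 0`,
`{d,Q} = 0`, `{d*,δ*} = 0`, `{d*,Q*} = 0`. -/
theorem statement5 (p q : ℕ) (hn : 1 ≤ p + q) :
    cm (opD p q) (opG p q) = opL p q ∧
    acm (opdR p q) (opdRs p q) = opL p q ∧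
    opdR p q * opdR p q = 0 ∧
    opdRs p q * opdRs p q = 0 ∧
    cm (opL p q) (opG p q) = 0 ∧
    cm (opL p q) (opD p q) = 0 ∧
    cm (opL p q) (opdR p q) = 0 ∧
    cm (opL p q) (opdRs p q) = 0 ∧
    cm (opD p q) (opdR p q) = 0 ∧
    cm (opD p q) (opdRs p q) = 0 ∧
    cm (opG p q) (opdR p q) = 0 ∧
    cm (opG p q) (opdRs p q) = 0 ∧
    cm (opD p q) (opR p q) = (2:ℝ) • opG p q ∧
    cm (opG p q) (opT p q) = (-2:ℝ) • opD p q ∧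
    cm (opG p q) (opd p q) = - opdR p q ∧
    cm (opG p q) (opQs p q) = - opdRs p q ∧
    cm (opD p q) (opds p q) = opdRs p q ∧
    cm (opD p q) (opQ p q) = opdR p q ∧
    acm (opdR p q) (opds p q) = opG p q ∧
    acm (opdR p q) (opQs p q) = opD p q ∧
    acm (opdRs p q) (opd p q) = opD p q ∧
    acm (opdRs p q) (opQ p q) = opG p q ∧
    acm (opdR p q) (opd p q) = 0 ∧
    acm (opdR p q) (opQ p q) = 0 ∧
    acm (opdRs p q) (opds p q) = 0 ∧
    acm (opdRs p q) (opQs p q) = 0 := by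
  refine ⟨?_, ?_, ?_, ?_, ?_, ?_, ?_, ?_, ?_, ?_, ?_, ?_, ?_, ?_, ?_, ?_, ?_, ?_, ?_, ?_,
    ?_, ?_, ?_, ?_, ?_, ?_⟩
  · rw [opD, opG, cm_sum_sum, opL]
    exact Finset.sum_congr rfl fun i _ => by simp [tw1]
  · rw [opdR, opdRs, acm_sum_sum, opL]
    exact Finset.sum_congr rfl fun i _ => by simp [tw2]
  · rw [opdR]; exact sq_zero_of_skew twd2
  · rw [opdRs]; exact sq_zero_of_skew twds2
  · rw [opL, opG, cm_sum_sum]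
    exact Finset.sum_eq_zero fun i _ => Finset.sum_eq_zero fun j _ => tw5 i j
  · rw [opL, opD, cm_sum_sum]
    exact Finset.sum_eq_zero fun i _ => Finset.sum_eq_zero fun j _ => tw6 i j
  · rw [opL, opdR, cm_sum_sum]
    exact Finset.sum_eq_zero fun i _ => Finset.sum_eq_zero fun j _ => tw7 i j
  · rw [opL, opdRs, cm_sum_sum]
    exact Finset.sum_eq_zero fun i _ => Finset.sum_eq_zero fun j _ => tw8 i j
  · rw [opD, opdR, cm_sum_sum]
    exact Finset.sum_eq_zero fun i _ => Finset.sum_eq_zero fun j _ => tw9 i j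
  · rw [opD, opdRs, cm_sum_sum]
    exact Finset.sum_eq_zero fun i _ => Finset.sum_eq_zero fun j _ => tw10 i j
  · rw [opG, opdR, cm_sum_sum]
    exact Finset.sum_eq_zero fun i _ => Finset.sum_eq_zero fun j _ => tw11 i j
  · rw [opG, opdRs, cm_sum_sum]
    exact Finset.sum_eq_zero fun i _ => Finset.sum_eq_zero fun j _ => tw12 i j
  · rw [opD, opR, cm_sum_sum, opG, Finset.smul_sum]
    exact Finset.sum_congr rfl fun i _ => by simp [tw13]
  · rw [opG, opT, cm_sum_sum, opD, Finset.smul_sum]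
    exact Finset.sum_congr rfl fun i _ => by simp [tw14]; rw [← neg_smul]
  · rw [opG, opd, cm_sum_sum, opdR, ← Finset.sum_neg_distrib]
    exact Finset.sum_congr rfl fun i _ => by simp [tw15]
  · rw [opG, opQs, cm_sum_sum, opdRs, ← Finset.sum_neg_distrib]
    exact Finset.sum_congr rfl fun i _ => by simp [tw16]
  · rw [opD, opds, cm_sum_sum, opdRs]
    exact Finset.sum_congr rfl fun i _ => by simp [tw17]
  · rw [opD, opQ, cm_sum_sum, opdR]
    exact Finset.sum_congr rfl fun i _ => by simp [tw18]
  · rw [opdR, opds, acm_sum_sum, opG]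
    exact Finset.sum_congr rfl fun i _ => by simp [tw19]
  · rw [opdR, opQs, acm_sum_sum, opD]
    exact Finset.sum_congr rfl fun i _ => by simp [tw20]
  · rw [opdRs, opd, acm_sum_sum, opD]
    exact Finset.sum_congr rfl fun i _ => by simp [tw21]
  · rw [opdRs, opQ, acm_sum_sum, opG]
    exact Finset.sum_congr rfl fun i _ => by simp [tw22]
  · rw [opdR, opd, acm_sum_sum]
    exact Finset.sum_eq_zero fun i _ => Finset.sum_eq_zero fun j _ => tw23 i j
  · rw [opdR, opQ, acm_sum_sum]
    exact Finset.sum_eq_zero fun i _ => Finset.sum_eq_zero fun j _ => tw24 i j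
  · rw [opdRs, opds, acm_sum_sum]
    exact Finset.sum_eq_zero fun i _ => Finset.sum_eq_zero fun j _ => tw25 i j
  · rw [opdRs, opQs, acm_sum_sum]
    exact Finset.sum_eq_zero fun i _ => Finset.sum_eq_zero fun j _ => tw26 i j
end

end SpinQuant
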